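/- In the BP encoding of a binary tree, the lowest common ancestor of two nodes u and v is the unique common ancestor of u and v whose inorder rank lies between the inorder ranks of u and v (inclusive). -/

import Mathlib

/-- A binary tree: `leaf` is the empty tree; each internal node has an
optional left and an optional right subtree (possibly `leaf`). -/
inductive BinTree : Type where
  | leaf : BinTree
  | node : BinTree → BinTree → BinTree
deriving DecidableEq

namespace BinTree

/-- Number of nodes of a binary tree. -/
def size : BinTree → ℕ
  | leaf => 0
  | node l r => l.size + r.size + 1

/-- BalancedBP-parenthesis encoding of binary trees:
`BP(empty) = ε`, `BP(t) = '(' ++ BP(t_l) ++ ')' ++ BP(t_r)`.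
`true` is an opening parenthesis, `false` a closing one. -/
def bp : BinTree → List Bool
  | leaf => []
  | node l r => true :: (l.bp ++ false :: r.bp)

/-- The subtree reached by following a path (`false` = left, `true` = right). -/
def subtreeAt : BinTree → List Bool → Option BinTree
  | t, [] => some t
  | leaf, _ :: _ => none
  | node l _, false :: p => subtreeAt l p
  | node _ r, true :: p => subtreeAt r p

/-- A path identifies an actual node of the tree (not an empty slot). -/
def ValidPath (t : BinTree) (p : List Bool) : Prop :=
  ∃ l r, subtreeAt t p = some (node l r)

/-- Index (0-based) of the opening parenthesis of the node at a path. -/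
def openIdx : BinTree → List Bool → Option ℕ
  | leaf, _ => none
  | node _ _, [] => some 0
  | node l _, false :: p => (openIdx l p).map (· + 1)
  | node l r, true :: p => (openIdx r p).map (· + (l.bp.length + 2))

/-- Index (0-based) of the closing parenthesis of the node at a path. -/
def closeIdx : BinTree → List Bool → Option ℕ
  | leaf, _ => none
  | node l _, [] => some (l.bp.length + 1)
  | node l _, false :: p => (closeIdx l p).map (· + 1)
  | node l r, true :: p => (closeIdx r p).map (· + (l.bp.length + 2))

/-- Inorder rank (0-based) of the node at a path. -/
def inorderIdx : BinTree → List Bool → Option ℕ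
  | leaf, _ => none
  | node l _, [] => some l.size
  | node l _, false :: p => inorderIdx l p
  | node l r, true :: p => (inorderIdx r p).map (· + (l.size + 1))

end BinTree

/-- A sequence of parentheses (`true` = '(') is balanced: equally many opening
and closing parentheses, and every prefix has at least as many opening ones. -/
def BalancedBP (s : List Bool) : Prop :=
  s.count true = s.count false ∧
  ∀ k, (s.take k).count false ≤ (s.take k).count true

/-- `excess s k`: number of opening minus closing parentheses among the first `k` symbols. -/
def excess (s : List Bool) (k : ℕ) : ℤ :=
  ((s.take k).count true : ℤ) - ((s.take k).count false : ℤ)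

/-- `IsMatch s i j`: positions `i < j` form a matching pair of parentheses
(the standard stack-based matching). -/
def IsMatch (s : List Bool) (i j : ℕ) : Prop :=
  i < j ∧ j < s.length ∧ s[i]? = some true ∧ s[j]? = some false ∧
  excess s (j + 1) = excess s i ∧
  ∀ k, i < k → k ≤ j → excess s i < excess s k

/-- `EnclosePair s i v j`: `j` is the closing parenthesis whose matching pair
tightly encloses the matching pair `(i, v)`. -/
def EnclosePair (s : List Bool) (i v j : ℕ) : Prop :=
  (∃ i', IsMatch s i' j ∧ i' < i ∧ v < j) ∧
  ∀ i'' j'', IsMatch s i'' j'' → i'' < i → v < j'' → j ≤ j''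

/-- Longest common prefix of two paths. -/
def lcp : List Bool → List Bool → List Bool
  | a :: as, b :: bs => if a = b then a :: lcp as bs else []
  | _, _ => []

namespace BinTree

lemma inorderIdx_lt_size : ∀ (t : BinTree) (p : List Bool) (i : ℕ),
    inorderIdx t p = some i → i < t.size
  | leaf, p, i, h => by simp [inorderIdx] at h
  | node l r, [], i, h => by
      simp [inorderIdx] at h; simp [size]; omega
  | node l r, false :: p, i, h => by
      simp only [inorderIdx] at h
      have := inorderIdx_lt_size l p i h
      simp [size]; omega
  | node l r, true :: p, i, h => by
      simp only [inorderIdx, Option.map_eq_some_iff] at h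
      obtain ⟨j, hj, rfl⟩ := h
      have := inorderIdx_lt_size r p j hj
      simp [size]; omega

lemma inorder_left : ∀ (t : BinTree) (pw q : List Bool) (iw iu : ℕ),
    inorderIdx t pw = some iw →
    inorderIdx t (pw ++ false :: q) = some iu → iu < iw
  | leaf, pw, q, iw, iu, hw, hu => by simp [inorderIdx] at hw
  | node l r, [], q, iw, iu, hw, hu => by
      simp only [inorderIdx, Option.some.injEq] at hw
      simp only [List.nil_append, inorderIdx] at hu
      have := inorderIdx_lt_size l q iu hu
      omega
  | node l r, false :: pw, q, iw, iu, hw, hu => by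
      simp only [inorderIdx] at hw
      simp only [List.cons_append, inorderIdx] at hu
      exact inorder_left l pw q iw iu hw hu
  | node l r, true :: pw, q, iw, iu, hw, hu => by
      simp only [List.cons_append, inorderIdx, Option.map_eq_some_iff] at hw hu
      obtain ⟨jw, hjw, rfl⟩ := hw
      obtain ⟨ju, hju, rfl⟩ := hu
      have := inorder_left r pw q jw ju hjw hju
      omega

lemma inorder_right : ∀ (t : BinTree) (pw q : List Bool) (iw iv : ℕ),
    inorderIdx t pw = some iw →
    inorderIdx t (pw ++ true :: q) = some iv → iw < iv
  | leaf, pw, q, iw, iv, hw, hv => by simp [inorderIdx] at hw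
  | node l r, [], q, iw, iv, hw, hv => by
      simp only [inorderIdx, Option.some.injEq] at hw
      simp only [List.nil_append, inorderIdx, Option.map_eq_some_iff] at hv
      obtain ⟨j, hj, rfl⟩ := hv
      omega
  | node l r, false :: pw, q, iw, iv, hw, hv => by
      simp only [inorderIdx] at hw
      simp only [List.cons_append, inorderIdx] at hv
      exact inorder_right l pw q iw iv hw hv
  | node l r, true :: pw, q, iw, iv, hw, hv => by
      simp only [List.cons_append, inorderIdx, Option.map_eq_some_iff] at hw hv
      obtain ⟨jw, hjw, rfl⟩ := hw
      obtain ⟨jv, hjv, rfl⟩ := hv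
      have := inorder_right r pw q jw jv hjw hjv
      omega

end BinTree

lemma lcp_prefix_left : ∀ a b : List Bool, lcp a b <+: a
  | [], b => by simp [lcp]
  | a :: as, [] => by simp [lcp]
  | a :: as, b :: bs => by
      by_cases h : a = b
      · simpa [lcp, h] using lcp_prefix_left as bs
      · simp [lcp, h]

lemma lcp_prefix_right : ∀ a b : List Bool, lcp a b <+: b
  | [], b => by simp [lcp]
  | a :: as, [] => by simp [lcp]
  | a :: as, b :: bs => by
      by_cases h : a = b
      · subst h; simpa [lcp] using lcp_prefix_right as bs
      · simp [lcp, h]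

lemma prefix_lcp : ∀ a b p : List Bool, p <+: a → p <+: b → p <+: lcp a b
  | a, b, [], _, _ => List.nil_prefix
  | a :: as, b :: bs, x :: xs, ha, hb => by
      obtain ⟨ta, hta⟩ := ha
      obtain ⟨tb, htb⟩ := hb
      simp only [List.cons_append, List.cons.injEq] at hta htb
      obtain ⟨rfl, hta⟩ := hta
      obtain ⟨rfl, htb⟩ := htb
      have := prefix_lcp as bs xs ⟨ta, hta⟩ ⟨tb, htb⟩
      simpa [lcp] using this
  | [], b, x :: xs, ha, hb => by simp at ha
  | a :: as, [], x :: xs, ha, hb => by simp at hb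

lemma lcp_spec : ∀ a b : List Bool, (lcp a b = a) ∨ (lcp a b = b) ∨
    ∃ x y xs ys, x ≠ y ∧ a = lcp a b ++ x :: xs ∧ b = lcp a b ++ y :: ys
  | [], b => by simp [lcp]
  | a :: as, [] => by simp [lcp]
  | a :: as, b :: bs => by
      by_cases h : a = b
      · subst h
        rcases lcp_spec as bs with h' | h' | ⟨x, y, xs, ys, hxy, h1, h2⟩
        · left; simp [lcp, h']
        · right; left; simp [lcp, h']
        · right; right
          exact ⟨x, y, xs, ys, hxy, by simp [lcp]; exact h1,
            by simp [lcp]; exact h2⟩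
      · right; right
        exact ⟨a, b, as, bs, h, by simp [lcp, h], by simp [lcp, h]⟩

/-- the LCA of `u` and `v` is the unique common ancestor of `u`
and `v` whose inorder rank lies (inclusively) between those of `u` and `v`. -/
theorem lca_iff_inorder_between (t : BinTree) (pu pv pw : List Bool)
    (iu iv iw : ℕ)
    (hu : BinTree.inorderIdx t pu = some iu)
    (hv : BinTree.inorderIdx t pv = some iv)
    (hw : BinTree.inorderIdx t pw = some iw) :
    pw = lcp pu pv ↔
      (pw <+: pu ∧ pw <+: pv ∧ min iu iv ≤ iw ∧ iw ≤ max iu iv) := by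
  constructor
  · rintro rfl
    refine ⟨lcp_prefix_left _ _, lcp_prefix_right _ _, ?_⟩
    rcases lcp_spec pu pv with h | h | ⟨x, y, xs, ys, hxy, h1, h2⟩
    · rw [h] at hw; rw [hw] at hu
      obtain rfl : iu = iw := by simpa using hu.symm
      omega
    · rw [h] at hw; rw [hw] at hv
      obtain rfl : iv = iw := by simpa using hv.symm
      omega
    · set L := lcp pu pv with hL
      match x, y, hxy with
      | false, true, _ =>
        rw [h1] at hu; rw [h2] at hv
        have h3 := BinTree.inorder_left t L xs iw iu hw hu
        have h4 := BinTree.inorder_right t L ys iw iv hw hv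
        omega
      | true, false, _ =>
        rw [h1] at hu; rw [h2] at hv
        have h3 := BinTree.inorder_right t L xs iw iu hw hu
        have h4 := BinTree.inorder_left t L ys iw iv hw hv
        omega
  · rintro ⟨hpu, hpv, hmin, hmax⟩
    have hpl : pw <+: lcp pu pv := prefix_lcp _ _ _ hpu hpv
    by_contra hne
    obtain ⟨d, hd⟩ := hpl
    have hdne : d ≠ [] := by rintro rfl; simp at hd; exact hne hd
    obtain ⟨c, rest, rfl⟩ := List.exists_cons_of_ne_nil hdne
    have hLu : pw ++ c :: rest <+: pu := hd ▸ lcp_prefix_left pu pv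
    have hLv : pw ++ c :: rest <+: pv := hd ▸ lcp_prefix_right pu pv
    obtain ⟨su, hsu⟩ := hLu
    obtain ⟨sv, hsv⟩ := hLv
    rw [← hsu] at hu
    rw [← hsv] at hv
    rw [List.append_assoc, List.cons_append] at hu hv
    cases c with
    | false =>
      have h3 := BinTree.inorder_left t pw (rest ++ su) iw iu hw hu
      have h4 := BinTree.inorder_left t pw (rest ++ sv) iw iv hw hv
      omega
    | true =>
      have h3 := BinTree.inorder_right t pw (rest ++ su) iw iu hw hu
      have h4 := BinTree.inorder_right t pw (rest ++ sv) iw iv hw hv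
      omega
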